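/- Let g(K_n; q) be the least N such that for every set V of N points in the plane in general position and every q-coloring of the pairs of V, there exist n points of V in convex position all of whose pairs receive the same color. Then g(K_n; q) ≤ 2^{8 q n² log₂(q n)}. -/

import Mathlib

/-- A finite planar point set is in general position if no three of its points are collinear. -/
def GenPos (S : Finset (ℝ × ℝ)) : Prop :=
  ∀ T ⊆ S, T.card = 3 → ¬ Collinear ℝ (T : Set (ℝ × ℝ))

/-- A finite planar point set is in convex position if no point lies in the
convex hull of the others. -/
def ConvexPos (S : Finset (ℝ × ℝ)) : Prop :=
  ∀ p ∈ S, p ∉ convexHull ℝ ((S.erase p : Finset (ℝ × ℝ)) : Set (ℝ × ℝ))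

/-- `GeomRamseyProp n q N` : every set of at least `N` points in general position in the
plane, with any `q`-coloring of its pairs, contains `n` points in convex position all of
whose pairs receive the same color. -/
def GeomRamseyProp (n q N : ℕ) : Prop :=
  ∀ V : Finset (ℝ × ℝ), N ≤ V.card → GenPos V →
    ∀ χ : Finset (ℝ × ℝ) → Fin q,
      ∃ T ⊆ V, T.card = n ∧ ConvexPos T ∧
        ∃ c : Fin q, ∀ e ⊆ T, e.card = 2 → χ e = c

namespace GRG

abbrev Pt := ℝ × ℝ

/-- Twice the signed area of triangle `p q r`. -/
def D (p q r : Pt) : ℝ := (q.1 - p.1) * (r.2 - p.2) - (q.2 - p.2) * (r.1 - p.1)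

/-- lexicographic strict order -/
def llt (p q : Pt) : Prop := toLex p < toLex q

lemma llt_iff {p q : Pt} : llt p q ↔ p.1 < q.1 ∨ (p.1 = q.1 ∧ p.2 < q.2) := Prod.Lex.lt_iff

lemma llt_trans {p q r : Pt} (h1 : llt p q) (h2 : llt q r) : llt p r := lt_trans h1 h2

lemma llt_ne {p q : Pt} (h : llt p q) : p ≠ q := by
  rintro rfl; exact lt_irrefl _ h

lemma llt_fst_le {p q : Pt} (h : llt p q) : p.1 ≤ q.1 := by
  rcases llt_iff.1 h with h | ⟨h, _⟩
  · exact le_of_lt h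
  · exact le_of_eq h

lemma llt_total {p q : Pt} (h : p ≠ q) : llt p q ∨ llt q p := by
  rcases lt_trichotomy (toLex p) (toLex q) with h1 | h1 | h1
  · exact Or.inl h1
  · exact absurd (toLex.injective h1) h
  · exact Or.inr h1

lemma smul_vadd_pt (t : ℝ) (v p : Pt) : t • v +ᵥ p = (t * v.1 + p.1, t * v.2 + p.2) := by
  ext <;> simp [Prod.smul_def, smul_eq_mul]

lemma collinear_of_D_eq_zero {p q r : Pt} (h : D p q r = 0) :
    Collinear ℝ ({p, q, r} : Set Pt) := by
  by_cases hpq : q = p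
  · have he : ({p, q, r} : Set Pt) = {p, r} := by
      rw [hpq]; simp
    rw [he]; exact collinear_pair ℝ p r
  · rw [collinear_iff_of_mem (Set.mem_insert p {q, r})]
    refine ⟨q - p, ?_⟩
    intro x hx
    have hD : (q.1 - p.1) * (r.2 - p.2) = (q.2 - p.2) * (r.1 - p.1) := by
      have := h; simp only [D] at this; linarith
    rcases hx with rfl | rfl | hx
    · exact ⟨0, by simp⟩
    · refine ⟨1, ?_⟩
      rw [smul_vadd_pt]
      ext <;> simp
    · -- x = r
      subst hx
      by_cases h1 : q.1 - p.1 = 0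
      · have hq2 : q.2 - p.2 ≠ 0 := by
          intro h2
          exact hpq (by ext <;> [linarith; linarith])
        have hr1 : x.1 - p.1 = 0 := by
          have h0 : (q.2 - p.2) * (x.1 - p.1) = 0 := by rw [h1] at hD; linarith
          rcases mul_eq_zero.1 h0 with h | h
          · exact absurd h hq2
          · exact h
        refine ⟨(x.2 - p.2) / (q.2 - p.2), ?_⟩
        rw [smul_vadd_pt]
        have e1 : x.1 = p.1 := by linarith
        have e2 : (x.2 - p.2) / (q.2 - p.2) * (q.2 - p.2) + p.2 = x.2 := by
          field_simp
          ring
        ext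
        · simp [e1, h1]
        · simpa using e2.symm
      · refine ⟨(x.1 - p.1) / (q.1 - p.1), ?_⟩
        rw [smul_vadd_pt]
        ext
        · simp
          field_simp
          ring
        · simp
          field_simp
          nlinarith [hD]

/-- alternating / permutation identities (provable by `ring` via `simp [D]`). -/
lemma D_swap12 (p q r : Pt) : D q p r = - D p q r := by simp only [D]; ring
lemma D_swap23 (p q r : Pt) : D p r q = - D p q r := by simp only [D]; ring

/-- key four-point identity -/
lemma D_four (p q r t : Pt) :
    D p r t * (r.1 - q.1) = (t.1 - r.1) * D p q r + (r.1 - p.1) * D q r t := by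
  simp only [D]; ring

-- appended to part1 context (testing standalone with part1 inlined)
end GRG

section
variable {V : Finset GRG.Pt}
open GRG

lemma genpos_D_ne (hV : GenPos V) {p q r : Pt} (hp : p ∈ V) (hq : q ∈ V) (hr : r ∈ V)
    (hpq : p ≠ q) (hpr : p ≠ r) (hqr : q ≠ r) : D p q r ≠ 0 := by
  intro h0
  have hcard : ({p, q, r} : Finset Pt).card = 3 := by
    rw [Finset.card_insert_of_notMem (by simp [hpq, hpr]),
      Finset.card_insert_of_notMem (by simp [hqr]), Finset.card_singleton]
  have hsub : ({p, q, r} : Finset Pt) ⊆ V := by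
    intro x hx
    simp only [Finset.mem_insert, Finset.mem_singleton] at hx
    rcases hx with rfl | rfl | rfl <;> assumption
  apply hV _ hsub hcard
  have : (({p, q, r} : Finset Pt) : Set Pt) = ({p, q, r} : Set Pt) := by simp
  rw [this]
  exact collinear_of_D_eq_zero h0

/-- Four-point transitivity, positive version. -/
lemma D_trans_pos {p q r t : Pt} (h1 : llt p q) (h2 : llt q r) (h3 : llt r t)
    (hpqr : 0 < D p q r) (hqrt : 0 < D q r t) : 0 < D p r t := by
  have hpq := llt_fst_le h1
  have hrt := llt_fst_le h3
  rcases llt_iff.1 h2 with hqr | ⟨hqr, hqr2⟩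
  · -- main case q.1 < r.1
    have key := D_four p q r t
    have hrp : p.1 < r.1 := lt_of_le_of_lt hpq hqr
    nlinarith [key]
  · -- vertical middle pair: contradiction with hqrt
    exfalso
    have : D q r t = -(r.2 - q.2) * (t.1 - q.1) := by
      simp only [D]; rw [hqr]; ring
    nlinarith [this, hqr2, hrt, hqr]

/-- Four-point transitivity, negative version. -/
lemma D_trans_neg {p q r t : Pt} (h1 : llt p q) (h2 : llt q r) (h3 : llt r t)
    (hpqr : D p q r < 0) (hqrt : D q r t < 0) : D p r t < 0 := by
  have hpq := llt_fst_le h1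
  have hrt := llt_fst_le h3
  rcases llt_iff.1 h2 with hqr | ⟨hqr, hqr2⟩
  · have key := D_four p q r t
    have hrp : p.1 < r.1 := lt_of_le_of_lt hpq hqr
    nlinarith [key]
  · exfalso
    have : D p q r = (q.1 - p.1) * (r.2 - q.2) := by
      simp only [D]; rw [hqr]; ring
    rcases llt_iff.1 h1 with hpq1 | ⟨hpq1, _⟩
    · nlinarith [this, hqr2]
    · nlinarith [this, hqr2, hpq1]

/-- monotonicity core: sign of `det(w, ·)` along slope order, for vectors in the
right (lex-positive) half plane. -/
lemma mono_core {w u u' : Pt}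
    (hw : 0 < w.1 ∨ (w.1 = 0 ∧ 0 < w.2))
    (hu : 0 < u.1 ∨ (u.1 = 0 ∧ 0 < u.2))
    (hu' : 0 < u'.1 ∨ (u'.1 = 0 ∧ 0 < u'.2))
    (hcross : 0 < u.1 * u'.2 - u.2 * u'.1)
    (hne : w.1 * u'.2 - w.2 * u'.1 ≠ 0)
    (hwu : 0 < w.1 * u.2 - w.2 * u.1) : 0 < w.1 * u'.2 - w.2 * u'.1 := by
  rcases hw with hw1 | ⟨hw1, hw2⟩
  · rcases hu with hu1 | ⟨hu1, hu2⟩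
    · rcases hu' with hu'1 | ⟨hu'1, hu'2⟩
      · nlinarith
      · -- u' vertical: w.1 * u'.2 > 0
        have : w.1 * u'.2 - w.2 * u'.1 = w.1 * u'.2 := by rw [hu'1]; ring
        rw [this]; positivity
    · -- u vertical: cross ≤ 0, contradiction
      exfalso
      rcases hu' with hu'1 | ⟨hu'1, _⟩
      · have he : u.1 * u'.2 - u.2 * u'.1 = -(u.2 * u'.1) := by rw [hu1]; ring
        nlinarith [mul_pos hu2 hu'1]
      · have he : u.1 * u'.2 - u.2 * u'.1 = 0 := by rw [hu1, hu'1]; ring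
        nlinarith
  · -- w vertical: w.1*u.2 - w.2*u.1 = -w.2*u.1 ≤ 0 contradiction with hwu
    exfalso
    rcases hu with hu1 | ⟨hu1, hu2⟩
    · have he : w.1 * u.2 - w.2 * u.1 = -(w.2 * u.1) := by rw [hw1]; ring
      nlinarith [mul_pos hw2 hu1]
    · have he : w.1 * u.2 - w.2 * u.1 = 0 := by rw [hw1, hu1]; ring
      nlinarith
end

section
open GRG Finset

namespace GRG

lemma D_cyclic (p q r : Pt) : D q r p = D p q r := by simp only [D]; ring
lemma D_self13 (p q : Pt) : D p q p = 0 := by simp only [D]; ring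
lemma D_self23 (p q : Pt) : D p q q = 0 := by simp only [D]; ring

lemma D_centerMass {S' : Finset Pt} {f : Pt → ℝ} {p : Pt} (A B : Pt)
    (hsum : ∑ y ∈ S', f y = 1)
    (h1 : ∑ y ∈ S', f y * y.1 = p.1) (h2 : ∑ y ∈ S', f y * y.2 = p.2) :
    D A B p = ∑ y ∈ S', f y * D A B y := by
  have e : ∀ y : Pt, f y * D A B y =
      (B.1 - A.1) * (f y * y.2) - (B.2 - A.2) * (f y * y.1)
        - ((B.1 - A.1) * A.2 - (B.2 - A.2) * A.1) * f y := by
    intro y; simp only [D]; ring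
  rw [Finset.sum_congr rfl (fun y _ => e y), Finset.sum_sub_distrib,
      Finset.sum_sub_distrib, ← Finset.mul_sum, ← Finset.mul_sum, ← Finset.mul_sum,
      hsum, h1, h2]
  simp only [D]; ring

/-- The points of a sequence with all triples of the same orientation are in
convex position. -/
lemma convexPos_of_signs {n : ℕ} (hn : 2 ≤ n)
    (w : Fin n → Pt) (hmono : ∀ i j : Fin n, i < j → llt (w i) (w j))
    (σ : ℝ) (htri : ∀ i j k : Fin n, i < j → j < k → 0 < σ * D (w i) (w j) (w k)) :
    ConvexPos (Finset.image w Finset.univ) := by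
  intro p hp hmem
  obtain ⟨j, -, rfl⟩ := Finset.mem_image.1 hp
  set S' : Finset Pt := (Finset.image w Finset.univ).erase (w j) with hS'
  rw [Finset.convexHull_eq] at hmem
  obtain ⟨f, hf0, hfsum, hfcm⟩ := hmem
  rw [Finset.centerMass_eq_of_sum_1 _ _ hfsum] at hfcm
  simp only [id] at hfcm
  have h1 : ∑ y ∈ S', f y * y.1 = (w j).1 := by
    have := congrArg Prod.fst hfcm
    simpa [Prod.fst_sum, smul_eq_mul] using this
  have h2 : ∑ y ∈ S', f y * y.2 = (w j).2 := by
    have := congrArg Prod.snd hfcm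
    simpa [Prod.snd_sum, smul_eq_mul] using this
  -- membership in S' means w i with w i ≠ w j hence i ≠ j
  have hmem' : ∀ y ∈ S', ∃ i : Fin n, i ≠ j ∧ w i = y := by
    intro y hy
    have hy' := Finset.mem_of_mem_erase hy
    obtain ⟨i, -, rfl⟩ := Finset.mem_image.1 hy'
    refine ⟨i, fun h => ?_, rfl⟩
    subst h
    exact (Finset.notMem_erase _ _) hy
  -- w is injective
  have hinj : ∀ i k : Fin n, w i = w k → i = k := by
    intro i k h
    rcases lt_trichotomy i k with hik | hik | hik
    · exact absurd h (llt_ne (hmono _ _ hik))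
    · exact hik
    · exact absurd h.symm (llt_ne (hmono _ _ hik))
  by_cases hj0 : (j : ℕ) = 0
  · -- p is the first point: face argument with line through w 0 = w j and w 1
    have h1n : (1 : ℕ) < n := hn
    set i1 : Fin n := ⟨1, h1n⟩ with hi1
    have hv1 : (i1 : ℕ) = 1 := rfl
    have hji1 : j < i1 := by
      apply Fin.lt_def.2; rw [hj0, hv1]; exact Nat.zero_lt_one
    have hw1S' : w i1 ∈ S' := by
      apply Finset.mem_erase.2
      exact ⟨fun h => absurd (hinj _ _ h) (Fin.ne_of_gt hji1),
        Finset.mem_image.2 ⟨i1, Finset.mem_univ _, rfl⟩⟩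
    have hgnn : ∀ y ∈ S', 0 ≤ f y * (σ * D (w j) (w i1) y) := by
      intro y hy
      obtain ⟨i, hij, rfl⟩ := hmem' y hy
      apply mul_nonneg (hf0 _ hy)
      rcases lt_trichotomy i i1 with hii | hii | hii
      · -- i < i1 and i ≠ j ⇒ impossible since j = 0, i1 = 1 ⇒ i = 0 = j
        exfalso
        apply hij
        apply Fin.ext
        have h' := Fin.lt_def.1 hii
        rw [hv1] at h'
        omega
      · subst hii; rw [D_self23, mul_zero]
      · exact le_of_lt (htri _ _ _ hji1 hii)
    have hzero : ∑ y ∈ S', f y * (σ * D (w j) (w i1) y) = 0 := by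
      have e := D_centerMass (p := w j) (w j) (w i1) hfsum h1 h2
      rw [D_self13] at e
      have : ∑ y ∈ S', f y * (σ * D (w j) (w i1) y)
          = σ * ∑ y ∈ S', f y * D (w j) (w i1) y := by
        rw [Finset.mul_sum]; apply Finset.sum_congr rfl; intro y _; ring
      rw [this, ← e]; ring
    have hterm : ∀ y ∈ S', f y * (σ * D (w j) (w i1) y) = 0 :=
      (Finset.sum_eq_zero_iff_of_nonneg hgnn).1 hzero
    -- every y ≠ w i1 in S' has f y = 0
    have hfz : ∀ y ∈ S', y ≠ w i1 → f y = 0 := by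
      intro y hy hne
      obtain ⟨i, hij, rfl⟩ := hmem' y hy
      have hii1 : i1 < i := by
        rcases lt_trichotomy i i1 with hii | hii | hii
        · exfalso; apply hij; apply Fin.ext
          have h' := Fin.lt_def.1 hii; rw [hv1] at h'; omega
        · exact absurd (congrArg w hii) hne
        · exact hii
      have hpos : 0 < σ * D (w j) (w i1) (w i) := htri _ _ _ hji1 hii1
      have := hterm _ hy
      rcases mul_eq_zero.1 this with h | h
      · exact h
      · exact absurd h (ne_of_gt hpos)
    have hf1 : f (w i1) = 1 := by
      rw [← hfsum]
      exact (Finset.sum_eq_single_of_mem _ hw1S' (fun y hy hne => hfz y hy hne)).symm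
    have e1 : (w j).1 = (w i1).1 := by
      rw [← h1]
      rw [Finset.sum_eq_single_of_mem (w i1) hw1S'
        (fun y hy hne => by rw [hfz y hy hne]; ring), hf1, one_mul]
    have e2 : (w j).2 = (w i1).2 := by
      rw [← h2]
      rw [Finset.sum_eq_single_of_mem (w i1) hw1S'
        (fun y hy hne => by rw [hfz y hy hne]; ring), hf1, one_mul]
    exact llt_ne (hmono _ _ hji1) (Prod.ext e1 e2)
  · by_cases hjl : (j : ℕ) = n - 1
    · -- p is the last point: face argument with line through w (n-2) and w j
      have h2n : n - 2 < n := by omega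
      set i2 : Fin n := ⟨n - 2, h2n⟩ with hi2
      have hv2 : (i2 : ℕ) = n - 2 := rfl
      have hji2 : i2 < j := by
        apply Fin.lt_def.2; rw [hjl, hv2]; omega
      have hw2S' : w i2 ∈ S' := by
        apply Finset.mem_erase.2
        exact ⟨fun h => absurd (hinj _ _ h) (Fin.ne_of_lt hji2),
          Finset.mem_image.2 ⟨i2, Finset.mem_univ _, rfl⟩⟩
      have hgnn : ∀ y ∈ S', 0 ≤ f y * (σ * D (w i2) (w j) y) := by
        intro y hy
        obtain ⟨i, hij, rfl⟩ := hmem' y hy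
        apply mul_nonneg (hf0 _ hy)
        rcases lt_trichotomy i i2 with hii | hii | hii
        · have := htri _ _ _ hii hji2
          rw [D_cyclic (w i) (w i2) (w j)]
          exact le_of_lt this
        · subst hii; rw [D_self13, mul_zero]
        · exfalso; apply hij; apply Fin.ext
          have h' := Fin.lt_def.1 hii; rw [hv2] at h'
          have h'' := j.isLt
          omega
      have hzero : ∑ y ∈ S', f y * (σ * D (w i2) (w j) y) = 0 := by
        have e := D_centerMass (p := w j) (w i2) (w j) hfsum h1 h2
        rw [D_self23] at e
        have : ∑ y ∈ S', f y * (σ * D (w i2) (w j) y)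
            = σ * ∑ y ∈ S', f y * D (w i2) (w j) y := by
          rw [Finset.mul_sum]; apply Finset.sum_congr rfl; intro y _; ring
        rw [this, ← e]; ring
      have hterm : ∀ y ∈ S', f y * (σ * D (w i2) (w j) y) = 0 :=
        (Finset.sum_eq_zero_iff_of_nonneg hgnn).1 hzero
      have hfz : ∀ y ∈ S', y ≠ w i2 → f y = 0 := by
        intro y hy hne
        obtain ⟨i, hij, rfl⟩ := hmem' y hy
        have hii2 : i < i2 := by
          rcases lt_trichotomy i i2 with hii | hii | hii
          · exact hii
          · exact absurd (congrArg w hii) hne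
          · exfalso; apply hij; apply Fin.ext
            have h' := Fin.lt_def.1 hii; rw [hv2] at h'
            have h'' := j.isLt
            omega
        have hpos : 0 < σ * D (w i) (w i2) (w j) := htri _ _ _ hii2 hji2
        rw [← D_cyclic (w i) (w i2) (w j)] at hpos
        have := hterm _ hy
        rcases mul_eq_zero.1 this with h | h
        · exact h
        · exact absurd h (ne_of_gt hpos)
      have hf1 : f (w i2) = 1 := by
        rw [← hfsum]
        exact (Finset.sum_eq_single_of_mem _ hw2S' (fun y hy hne => hfz y hy hne)).symm
      have e1 : (w j).1 = (w i2).1 := by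
        rw [← h1]
        rw [Finset.sum_eq_single_of_mem (w i2) hw2S'
          (fun y hy hne => by rw [hfz y hy hne]; ring), hf1, one_mul]
      have e2 : (w j).2 = (w i2).2 := by
        rw [← h2]
        rw [Finset.sum_eq_single_of_mem (w i2) hw2S'
          (fun y hy hne => by rw [hfz y hy hne]; ring), hf1, one_mul]
      exact llt_ne (hmono _ _ hji2) (Prod.ext e1 e2).symm
    · -- interior point: strict separation by the line through the neighbours
      have hjv := j.isLt
      have hm : (j : ℕ) - 1 < n := by omega
      have hp' : (j : ℕ) + 1 < n := by omega
      set jm : Fin n := ⟨(j : ℕ) - 1, hm⟩ with hjm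
      set jp : Fin n := ⟨(j : ℕ) + 1, hp'⟩ with hjp
      have hvm : (jm : ℕ) = (j : ℕ) - 1 := rfl
      have hvp : (jp : ℕ) = (j : ℕ) + 1 := rfl
      have hmj : jm < j := by apply Fin.lt_def.2; rw [hvm]; omega
      have hjp' : j < jp := by apply Fin.lt_def.2; rw [hvp]; omega
      have hgnn : ∀ y ∈ S', 0 ≤ f y * (σ * D (w jm) (w jp) y) := by
        intro y hy
        obtain ⟨i, hij, rfl⟩ := hmem' y hy
        apply mul_nonneg (hf0 _ hy)
        rcases lt_trichotomy i jm with hii | hii | hii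
        · have := htri _ _ _ hii (lt_trans hmj hjp')
          rw [D_cyclic (w i) (w jm) (w jp)]
          exact le_of_lt this
        · subst hii; rw [D_self13, mul_zero]
        · rcases lt_trichotomy i jp with hii' | hii' | hii'
          · exfalso; apply hij; apply Fin.ext
            have a1 := Fin.lt_def.1 hii; have a2 := Fin.lt_def.1 hii'
            rw [hvm] at a1; rw [hvp] at a2; omega
          · subst hii'; rw [D_self23, mul_zero]
          · exact le_of_lt (htri _ _ _ (lt_trans hmj hjp') hii')
      have hsum_nn : 0 ≤ ∑ y ∈ S', f y * (σ * D (w jm) (w jp) y) :=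
        Finset.sum_nonneg hgnn
      have hzero : ∑ y ∈ S', f y * (σ * D (w jm) (w jp) y)
          = σ * D (w jm) (w jp) (w j) := by
        have e := D_centerMass (p := w j) (w jm) (w jp) hfsum h1 h2
        have : ∑ y ∈ S', f y * (σ * D (w jm) (w jp) y)
            = σ * ∑ y ∈ S', f y * D (w jm) (w jp) y := by
          rw [Finset.mul_sum]; apply Finset.sum_congr rfl; intro y _; ring
        rw [this, ← e]
      have hneg : σ * D (w jm) (w jp) (w j) < 0 := by
        have := htri _ _ _ hmj hjp'
        rw [D_swap23 (w jm) (w j) (w jp)]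
        nlinarith [this]
      rw [hzero] at hsum_nn
      linarith
end GRG
end

namespace GRG
open Finset

/-- chain-ending-at-`a` sets for the boolean relation `τ` restricted to `I`. -/
def chainsAt {m : ℕ} (I : Finset (Fin m)) (τ : Fin m → Fin m → Bool) (v : Bool) (a : Fin m) :
    Finset (Finset (Fin m)) :=
  I.powerset.filter (fun s => a ∈ s ∧ (∀ x ∈ s, x ≤ a) ∧
    ∀ x ∈ s, ∀ y ∈ s, x < y → τ x y = v)

def glen {m : ℕ} (I : Finset (Fin m)) (τ : Fin m → Fin m → Bool) (v : Bool) (a : Fin m) : ℕ :=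
  (chainsAt I τ v a).sup Finset.card

lemma glen_pos {m : ℕ} {I : Finset (Fin m)} {τ} {v : Bool} {a : Fin m} (ha : a ∈ I) :
    1 ≤ glen I τ v a := by
  have hmem : ({a} : Finset (Fin m)) ∈ chainsAt I τ v a := by
    unfold chainsAt
    refine Finset.mem_filter.2 ⟨Finset.mem_powerset.2 (by simpa using ha), by simp, ?_, ?_⟩
    · intro x hx; simp at hx; subst hx; exact le_refl _
    · intro x hx y hy hlt; simp at hx hy; subst hx; subst hy; exact absurd hlt (lt_irrefl _)
  calc 1 = ({a} : Finset (Fin m)).card := by simp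
  _ ≤ glen I τ v a := Finset.le_sup hmem

lemma glen_lt {m : ℕ} {I : Finset (Fin m)} {τ} {v : Bool} {a b : Fin m}
    (ha : a ∈ I) (hb : b ∈ I) (hab : a < b) (hτ : τ a b = v)
    (htrans : ∀ x, x ∈ I → x < a → τ x a = v → τ x b = v) :
    glen I τ v a < glen I τ v b := by
  have hne : (chainsAt I τ v a).Nonempty := by
    refine ⟨{a}, ?_⟩
    unfold chainsAt
    refine Finset.mem_filter.2 ⟨Finset.mem_powerset.2 (by simpa using ha), by simp, ?_, ?_⟩
    · intro x hx; simp at hx; subst hx; exact le_refl _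
    · intro x hx y hy hlt; simp at hx hy; subst hx; subst hy; exact absurd hlt (lt_irrefl _)
  obtain ⟨s, hs, hsup⟩ := Finset.exists_mem_eq_sup _ hne Finset.card
  unfold chainsAt at hs
  have hs' := Finset.mem_filter.1 hs
  have hspow := Finset.mem_powerset.1 hs'.1
  have has := hs'.2.1
  have hsle := hs'.2.2.1
  have hschain := hs'.2.2.2
  have hbs : b ∉ s := fun h => absurd (hsle b h) (not_le.2 hab)
  have hmem : insert b s ∈ chainsAt I τ v b := by
    unfold chainsAt
    refine Finset.mem_filter.2 ⟨Finset.mem_powerset.2 ?_, Finset.mem_insert_self _ _, ?_, ?_⟩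
    · intro x hx
      rcases Finset.mem_insert.1 hx with rfl | hx
      · exact hb
      · exact hspow hx
    · intro x hx
      rcases Finset.mem_insert.1 hx with rfl | hx
      · exact le_refl _
      · exact le_trans (hsle x hx) (le_of_lt hab)
    · intro x hx y hy hlt
      rcases Finset.mem_insert.1 hx with hx' | hx'
      · subst hx'
        rcases Finset.mem_insert.1 hy with hy' | hy'
        · subst hy'; exact absurd hlt (lt_irrefl _)
        · exact absurd (lt_of_lt_of_le hlt (le_trans (hsle y hy') (le_of_lt hab)))
            (lt_irrefl _)
      · rcases Finset.mem_insert.1 hy with hy' | hy'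
        · -- x ∈ s, y = b
          subst hy'
          rcases eq_or_lt_of_le (hsle x hx') with hxa | hxa
          · rw [hxa]; exact hτ
          · exact htrans x (hspow hx') hxa (hschain x hx' a has hxa)
        · exact hschain x hx' y hy' hlt
  calc glen I τ v a = s.card := hsup
  _ < (insert b s).card := by rw [Finset.card_insert_of_notMem hbs]; omega
  _ ≤ glen I τ v b := Finset.le_sup hmem

lemma glen_le {m n : ℕ} {I : Finset (Fin m)} {τ} {v : Bool} {a : Fin m}
    (hno : ∀ J, J ⊆ I → J.card = n → ¬ (∀ x ∈ J, ∀ y ∈ J, x < y → τ x y = v))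
    (hn : 1 ≤ n) : glen I τ v a ≤ n - 1 := by
  apply Finset.sup_le
  intro s hs
  unfold chainsAt at hs
  have hm := Finset.mem_filter.1 hs
  by_contra hlt
  push_neg at hlt
  have hcard : n ≤ s.card := by omega
  obtain ⟨J, hJs, hJcard⟩ := Finset.exists_subset_card_eq hcard
  exact hno J (le_trans hJs (Finset.mem_powerset.1 hm.1)) hJcard
    (fun x hx y hy hxy => hm.2.2.2 x (hJs hx) y (hJs hy) hxy)

/-- Dilworth/Mirsky style extraction. -/
lemma mirsky {m n : ℕ} (hn : 1 ≤ n) (I : Finset (Fin m)) (τ : Fin m → Fin m → Bool)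
    (htP : ∀ a b c, a ∈ I → b ∈ I → c ∈ I → a < b → b < c →
      τ a b = true → τ b c = true → τ a c = true)
    (htN : ∀ a b c, a ∈ I → b ∈ I → c ∈ I → a < b → b < c →
      τ a b = false → τ b c = false → τ a c = false)
    (hcard : (n-1)*(n-1) + 1 ≤ I.card) :
    ∃ J, J ⊆ I ∧ J.card = n ∧
      ((∀ x ∈ J, ∀ y ∈ J, x < y → τ x y = true) ∨
       (∀ x ∈ J, ∀ y ∈ J, x < y → τ x y = false)) := by
  by_contra hno
  push_neg at hno
  -- both glen functions are bounded by n-1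
  have hnoP : ∀ J, J ⊆ I → J.card = n → ¬ (∀ x ∈ J, ∀ y ∈ J, x < y → τ x y = true) := by
    intro J hJ hc hall
    rcases hno J hJ hc with ⟨h1, _⟩
    obtain ⟨x, hx, y, hy, hxy, hne⟩ := h1
    exact hne (hall x hx y hy hxy)
  have hnoN : ∀ J, J ⊆ I → J.card = n → ¬ (∀ x ∈ J, ∀ y ∈ J, x < y → τ x y = false) := by
    intro J hJ hc hall
    rcases hno J hJ hc with ⟨_, h2⟩
    obtain ⟨x, hx, y, hy, hxy, hne⟩ := h2
    exact hne (hall x hx y hy hxy)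
  -- pigeonhole into (n-1)² values
  set φ : Fin m → ℕ × ℕ := fun a => (glen I τ true a, glen I τ false a) with hφ
  have hmaps : ∀ a ∈ I, φ a ∈ (Finset.Icc 1 (n-1)) ×ˢ (Finset.Icc 1 (n-1)) := by
    intro a ha
    refine Finset.mem_product.2 ⟨Finset.mem_Icc.2 ⟨glen_pos ha, glen_le hnoP hn⟩,
      Finset.mem_Icc.2 ⟨glen_pos ha, glen_le hnoN hn⟩⟩
  have hclt : ((Finset.Icc 1 (n-1)) ×ˢ (Finset.Icc 1 (n-1))).card < I.card := by
    rw [Finset.card_product, Nat.card_Icc]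
    have : n - 1 + 1 - 1 = n - 1 := by omega
    rw [this]
    omega
  obtain ⟨a, ha, b, hb, hab, hfab⟩ :=
    Finset.exists_ne_map_eq_of_card_lt_of_maps_to hclt hmaps
  -- wlog a < b
  have key : ∀ x y : Fin m, x ∈ I → y ∈ I → x < y → φ x = φ y → False := by
    intro x y hx hy hxy heq
    have h1 : glen I τ true x = glen I τ true y := congrArg Prod.fst heq
    have h2 : glen I τ false x = glen I τ false y := congrArg Prod.snd heq
    cases hv : τ x y with
    | true =>
      have := glen_lt hx hy hxy hv (fun z hz hzx hzv => htP z x y hz hx hy hzx hxy hzv hv)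
      omega
    | false =>
      have := glen_lt hx hy hxy hv (fun z hz hzx hzv => htN z x y hz hx hy hzx hxy hzv hv)
      omega
  rcases lt_trichotomy a b with h | h | h
  · exact key a b ha hb h hfab
  · exact hab h
  · exact key b a hb ha h hfab.symm
end GRG

namespace GRG
open Finset

/-- a chain of boolean vectors has at most `l+1` elements -/
lemma patterns_card_le {l : ℕ} (P : Finset (Fin l → Bool))
    (hchain : ∀ p ∈ P, ∀ p' ∈ P,
      (∀ i, p i = true → p' i = true) ∨ (∀ i, p' i = true → p i = true)) :
    P.card ≤ l + 1 := by
  have hmaps : ∀ p ∈ P, (Finset.univ.filter (fun i => p i = true)).card ∈ Finset.range (l+1) := by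
    intro p _
    rw [Finset.mem_range]
    calc (Finset.univ.filter (fun i => p i = true)).card ≤ (Finset.univ : Finset (Fin l)).card :=
        Finset.card_le_card (Finset.filter_subset _ _)
    _ = l := by simp
    _ < l + 1 := Nat.lt_succ_self l
  have hinj : ∀ p ∈ P, ∀ p' ∈ P,
      (Finset.univ.filter (fun i => p i = true)).card
        = (Finset.univ.filter (fun i => p' i = true)).card → p = p' := by
    intro p hp p' hp' hcard
    have hset : (Finset.univ.filter (fun i => p i = true))
        = (Finset.univ.filter (fun i => p' i = true)) := by
      rcases hchain p hp p' hp' with h | h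
      · apply Finset.eq_of_subset_of_card_le
        · intro i hi
          simp only [Finset.mem_filter, Finset.mem_univ, true_and] at hi ⊢
          exact h i hi
        · omega
      · symm
        apply Finset.eq_of_subset_of_card_le
        · intro i hi
          simp only [Finset.mem_filter, Finset.mem_univ, true_and] at hi ⊢
          exact h i hi
        · omega
    funext i
    have := Finset.ext_iff.1 hset i
    simp only [Finset.mem_filter, Finset.mem_univ, true_and] at this
    cases h1 : p i <;> cases h2 : p' i
    · rfl
    · exact absurd (this.2 h2) (by simp [h1])
    · exact absurd (this.1 h1) (by simp [h2])
    · rfl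
  calc P.card ≤ (Finset.range (l+1)).card := Finset.card_le_card_of_injOn _ hmaps hinj
  _ = l + 1 := by simp

def Gfun (q : ℕ) : ℕ → ℕ → ℕ
  | _, 0 => 1
  | l, (m+1) => q * (l+1) * Gfun q (l+1) m + 1

lemma Gfun_pos (q l m : ℕ) : 1 ≤ Gfun q l m := by
  cases m <;> simp [Gfun]

end GRG

namespace GRG
open Finset

lemma greedy (V : Finset Pt) (hV : GenPos V) (q : ℕ) (hq : 1 ≤ q) (χ : Finset Pt → Fin q) :
    ∀ (m : ℕ) (L : List Pt) (S : Finset Pt),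
    (∀ s ∈ S, s ∈ V) → (∀ z ∈ L, z ∈ V) →
    (∀ z ∈ L, ∀ s ∈ S, llt z s) →
    Gfun q L.length m ≤ S.card →
    ∃ (v : Fin m → Pt) (e : Pt) (c : Fin m → Fin q),
      (∀ i, v i ∈ S) ∧ e ∈ S ∧
      (∀ i j : Fin m, i < j → llt (v i) (v j)) ∧
      (∀ i, llt (v i) e) ∧
      (∀ i j : Fin m, i < j → χ {v i, v j} = c i) ∧
      (∀ i, χ {v i, e} = c i) ∧
      (∀ (z : Pt) (b : Fin m), (z ∈ L ∨ ∃ a : Fin m, a < b ∧ z = v a) →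
        ∀ x y : Pt, ((∃ jj : Fin m, b < jj ∧ x = v jj) ∨ x = e) →
                    ((∃ jj : Fin m, b < jj ∧ y = v jj) ∨ y = e) →
        (0 < D z (v b) x ↔ 0 < D z (v b) y)) := by
  intro m
  induction m with
  | zero =>
    intro L S hSV hLV hLS hcard
    have hne : S.Nonempty := Finset.card_pos.1 (by
      have := Gfun_pos q L.length 0; omega)
    obtain ⟨e, he⟩ := hne
    exact ⟨fun i => i.elim0, e, fun i => i.elim0, fun i => i.elim0, he,
      fun i => i.elim0, fun i => i.elim0, fun i => i.elim0, fun i => i.elim0,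
      fun z b => b.elim0⟩
  | succ m IH =>
    intro L S hSV hLV hLS hcard
    set l := L.length with hl
    rw [show Gfun q l (m+1) = q * (l+1) * Gfun q (l+1) m + 1 from rfl] at hcard
    -- pick the lex-least point
    have hSne : S.Nonempty := Finset.card_pos.1 (by omega)
    obtain ⟨v₀, hv₀S, hv₀min⟩ := Finset.exists_min_image S toLex hSne
    set S' := S.erase v₀ with hS'
    have hS'sub : ∀ s ∈ S', s ∈ S := fun s hs => Finset.mem_of_mem_erase hs
    have hS'card : q * (l+1) * Gfun q (l+1) m ≤ S'.card := by
      rw [hS', Finset.card_erase_of_mem hv₀S]; omega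
    have hv₀lt : ∀ s ∈ S', llt v₀ s := by
      intro s hs
      have h1 := hv₀min s (hS'sub s hs)
      have h2 : s ≠ v₀ := Finset.ne_of_mem_erase hs
      exact lt_of_le_of_ne h1 (fun h => h2 (toLex.injective h.symm))
    -- the pattern map
    set pat : Pt → (Fin l → Bool) := fun s i => decide (0 < D (L.get i) v₀ s) with hpat
    set κ : Pt → Fin q × (Fin l → Bool) := fun s => (χ {v₀, s}, pat s) with hκ
    -- patterns realized on S' form a chain
    have hLV' : ∀ i : Fin l, L.get i ∈ V := fun i => hLV _ (L.get_mem i)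
    have hLlt : ∀ i : Fin l, llt (L.get i) v₀ := fun i => hLS _ (L.get_mem i) v₀ hv₀S
    have hchain : ∀ s ∈ S', ∀ s' ∈ S',
        (∀ i, pat s i = true → pat s' i = true) ∨
        (∀ i, pat s' i = true → pat s i = true) := by
      intro s hs s' hs'
      by_cases hss' : s = s'
      · subst hss'; left; intro i h; exact h
      · have hvs := hv₀lt s hs
        have hvs' := hv₀lt s' hs'
        have hcr : D v₀ s s' ≠ 0 :=
          genpos_D_ne hV (hSV v₀ hv₀S) (hSV s (hS'sub s hs)) (hSV s' (hS'sub s' hs'))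
            (llt_ne hvs) (llt_ne hvs') hss'
        have hkey : ∀ (a b : Pt), a ∈ S' → b ∈ S' → 0 < D v₀ a b →
            ∀ i, pat a i = true → pat b i = true := by
          intro a b ha hb hab i hpa
          have hza : 0 < D (L.get i) v₀ a := of_decide_eq_true hpa
          apply decide_eq_true
          set z := L.get i with hz
          have hwa : D z v₀ a = (v₀.1 - z.1) * (a.2 - v₀.2) - (v₀.2 - z.2) * (a.1 - v₀.1) := by
            simp only [D]; ring
          have hwb : D z v₀ b = (v₀.1 - z.1) * (b.2 - v₀.2) - (v₀.2 - z.2) * (b.1 - v₀.1) := by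
            simp only [D]; ring
          have hcross : D v₀ a b = (a.1 - v₀.1) * (b.2 - v₀.2) - (a.2 - v₀.2) * (b.1 - v₀.1) := rfl
          have hzb : D z v₀ b ≠ 0 :=
            genpos_D_ne hV (hLV' i) (hSV v₀ hv₀S) (hSV b (hS'sub b hb))
              (llt_ne (hLlt i)) (llt_ne (llt_trans (hLlt i) (hv₀lt b hb))) (llt_ne (hv₀lt b hb))
          have hw : 0 < v₀.1 - z.1 ∨ (v₀.1 - z.1 = 0 ∧ 0 < v₀.2 - z.2) := by
            rcases llt_iff.1 (hLlt i) with h | ⟨h, h2⟩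
            · left; linarith
            · right; exact ⟨by linarith, by linarith⟩
          have hu : 0 < a.1 - v₀.1 ∨ (a.1 - v₀.1 = 0 ∧ 0 < a.2 - v₀.2) := by
            rcases llt_iff.1 (hv₀lt a ha) with h | ⟨h, h2⟩
            · left; linarith
            · right; exact ⟨by linarith, by linarith⟩
          have hu' : 0 < b.1 - v₀.1 ∨ (b.1 - v₀.1 = 0 ∧ 0 < b.2 - v₀.2) := by
            rcases llt_iff.1 (hv₀lt b hb) with h | ⟨h, h2⟩
            · left; linarith
            · right; exact ⟨by linarith, by linarith⟩
          have := mono_core (w := (v₀.1 - z.1, v₀.2 - z.2)) (u := (a.1 - v₀.1, a.2 - v₀.2))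
            (u' := (b.1 - v₀.1, b.2 - v₀.2)) hw hu hu'
            (by simpa [← hcross] using hab)
            (by simpa [← hwb] using hzb)
            (by simpa [← hwa] using hza)
          simpa [← hwb] using this
        rcases lt_trichotomy (D v₀ s s') 0 with hlt | heq | hgt
        · right
          intro i
          apply hkey s' s hs' hs
          have hsw := D_swap23 v₀ s s'
          linarith
        · exact absurd heq hcr
        · left; exact fun i => hkey s s' hs hs' hgt i
    -- bound the number of patterns
    have hpatcard : (S'.image pat).card ≤ l + 1 := by
      apply patterns_card_le
      intro p hp p' hp'
      obtain ⟨s, hs, rfl⟩ := Finset.mem_image.1 hp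
      obtain ⟨s', hs', rfl⟩ := Finset.mem_image.1 hp'
      exact hchain s hs s' hs'
    -- pigeonhole
    set K : Finset (Fin q × (Fin l → Bool)) := Finset.univ ×ˢ (S'.image pat) with hK
    have hKmaps : ∀ s ∈ S', κ s ∈ K := by
      intro s hs
      exact Finset.mem_product.2 ⟨Finset.mem_univ _, Finset.mem_image_of_mem _ hs⟩
    have hKne : K.Nonempty := by
      have h1 : 0 < q * (l+1) * Gfun q (l+1) m :=
        Nat.mul_pos (Nat.mul_pos hq (Nat.succ_pos l)) (Gfun_pos q (l+1) m)
      obtain ⟨s, hs⟩ : S'.Nonempty := Finset.card_pos.1 (by omega)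
      exact ⟨κ s, hKmaps s hs⟩
    have hKcard : K.card * Gfun q (l+1) m ≤ S'.card := by
      have h1 : K.card ≤ q * (l+1) := by
        rw [hK, Finset.card_product]
        have h2 : (Finset.univ : Finset (Fin q)).card = q := by simp
        rw [h2]
        exact Nat.mul_le_mul_left q hpatcard
      calc K.card * Gfun q (l+1) m ≤ (q * (l+1)) * Gfun q (l+1) m :=
            Nat.mul_le_mul_right _ h1
      _ ≤ S'.card := hS'card
    obtain ⟨⟨c₀, P₀⟩, hc₀K, hfib⟩ :=
      Finset.exists_le_card_fiber_of_mul_le_card_of_maps_to hKmaps hKne hKcard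
    set S'' := S'.filter (fun x => κ x = (c₀, P₀)) with hS''
    have hS''sub : ∀ x ∈ S'', x ∈ S' := fun x hx => Finset.mem_of_mem_filter x hx
    have hS''fib : ∀ x ∈ S'', χ {v₀, x} = c₀ ∧ pat x = P₀ := by
      intro x hx
      have h := (Finset.mem_filter.1 hx).2
      rw [hκ] at h
      exact ⟨congrArg Prod.fst h, congrArg Prod.snd h⟩
    -- recursive call
    have hrec := IH (L ++ [v₀]) S''
      (fun s hs => hSV s (hS'sub s (hS''sub s hs)))
      (by intro z hz
          rcases List.mem_append.1 hz with h | h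
          · exact hLV z h
          · rw [List.mem_singleton.1 h]; exact hSV v₀ hv₀S)
      (by intro z hz s hs
          rcases List.mem_append.1 hz with h | h
          · exact hLS z h s (hS'sub s (hS''sub s hs))
          · rw [List.mem_singleton.1 h]; exact hv₀lt s (hS''sub s hs))
      (by rw [List.length_append, List.length_singleton]; exact hfib)
    obtain ⟨v', e, c', hv'S, heS, hv'mono, hv'e, hχ', hχe', hsign'⟩ := hrec
    -- assemble
    refine ⟨Fin.cons v₀ v', e, Fin.cons c₀ c', ?_, ?_, ?_, ?_, ?_, ?_, ?_⟩
    · intro i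
      refine Fin.cases ?_ (fun i' => ?_) i
      · rw [Fin.cons_zero]; exact hv₀S
      · rw [Fin.cons_succ]; exact hS'sub _ (hS''sub _ (hv'S i'))
    · exact hS'sub _ (hS''sub _ heS)
    · intro i j
      refine Fin.cases ?_ (fun j' => ?_) j
      · intro hij; exact absurd hij (Fin.not_lt_zero i)
      · refine Fin.cases ?_ (fun i' => ?_) i
        · intro _
          rw [Fin.cons_zero, Fin.cons_succ]
          exact hv₀lt _ (hS''sub _ (hv'S j'))
        · intro hij
          rw [Fin.cons_succ, Fin.cons_succ]
          exact hv'mono i' j' (Fin.succ_lt_succ_iff.1 hij)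
    · intro i
      refine Fin.cases ?_ (fun i' => ?_) i
      · rw [Fin.cons_zero]
        exact hv₀lt e (hS''sub _ heS)
      · rw [Fin.cons_succ]; exact hv'e i'
    · intro i j
      refine Fin.cases ?_ (fun j' => ?_) j
      · intro hij; exact absurd hij (Fin.not_lt_zero i)
      · refine Fin.cases ?_ (fun i' => ?_) i
        · intro _
          rw [Fin.cons_zero, Fin.cons_succ, Fin.cons_zero]
          exact (hS''fib _ (hv'S j')).1
        · intro hij
          rw [Fin.cons_succ, Fin.cons_succ, Fin.cons_succ]
          exact hχ' i' j' (Fin.succ_lt_succ_iff.1 hij)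
    · intro i
      refine Fin.cases ?_ (fun i' => ?_) i
      · rw [Fin.cons_zero, Fin.cons_zero]
        exact (hS''fib _ heS).1
      · rw [Fin.cons_succ, Fin.cons_succ]; exact hχe' i'
    · -- sign constancy
      intro z b
      refine Fin.cases ?_ (fun b' => ?_) b
      · -- b = 0 : use the pattern fiber
        intro hzb x y hx hy
        rw [Fin.cons_zero]
        have hzL : z ∈ L := by
          rcases hzb with h | ⟨a, ha, _⟩
          · exact h
          · exact absurd ha (Fin.not_lt_zero a)
        obtain ⟨i, hi⟩ := List.mem_iff_get.1 hzL
        have hxS'' : x ∈ S'' := by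
          rcases hx with ⟨jj, hjj, rfl⟩ | rfl
          · obtain ⟨jj', rfl⟩ := Fin.eq_succ_of_ne_zero (Fin.pos_iff_ne_zero.1 hjj)
            rw [Fin.cons_succ]; exact hv'S jj'
          · exact heS
        have hyS'' : y ∈ S'' := by
          rcases hy with ⟨jj, hjj, rfl⟩ | rfl
          · obtain ⟨jj', rfl⟩ := Fin.eq_succ_of_ne_zero (Fin.pos_iff_ne_zero.1 hjj)
            rw [Fin.cons_succ]; exact hv'S jj'
          · exact heS
        have hpx := (hS''fib x hxS'').2
        have hpy := (hS''fib y hyS'').2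
        have ex : pat x i = P₀ i := by rw [hpx]
        have ey : pat y i = P₀ i := by rw [hpy]
        rw [hpat] at ex ey
        simp only at ex ey
        rw [hi] at ex ey
        have exy : decide (0 < D z v₀ x) = decide (0 < D z v₀ y) := by rw [ex, ey]
        constructor
        · intro h; exact of_decide_eq_true (exy ▸ decide_eq_true h)
        · intro h; exact of_decide_eq_true (exy.symm ▸ decide_eq_true h)
      · -- b = succ b' : use the recursive property
        intro hzb x y hx hy
        rw [Fin.cons_succ]
        have hz' : z ∈ (L ++ [v₀]) ∨ ∃ a' : Fin m, a' < b' ∧ z = v' a' := by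
          rcases hzb with h | ⟨a, ha, hza⟩
          · exact Or.inl (List.mem_append.2 (Or.inl h))
          · rcases Fin.eq_zero_or_eq_succ a with rfl | ⟨a', rfl⟩
            · rw [Fin.cons_zero] at hza
              refine Or.inl (List.mem_append.2 (Or.inr ?_))
              rw [hza]; exact List.mem_singleton_self _
            · rw [Fin.cons_succ] at hza
              exact Or.inr ⟨a', Fin.succ_lt_succ_iff.1 ha, hza⟩
        have hx' : (∃ jj' : Fin m, b' < jj' ∧ x = v' jj') ∨ x = e := by
          rcases hx with ⟨jj, hjj, hxe⟩ | h
          · rcases Fin.eq_zero_or_eq_succ jj with rfl | ⟨jj', rfl⟩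
            · exact absurd hjj (Fin.not_lt_zero _)
            · rw [Fin.cons_succ] at hxe
              exact Or.inl ⟨jj', Fin.succ_lt_succ_iff.1 hjj, hxe⟩
          · exact Or.inr h
        have hy' : (∃ jj' : Fin m, b' < jj' ∧ y = v' jj') ∨ y = e := by
          rcases hy with ⟨jj, hjj, hye⟩ | h
          · rcases Fin.eq_zero_or_eq_succ jj with rfl | ⟨jj', rfl⟩
            · exact absurd hjj (Fin.not_lt_zero _)
            · rw [Fin.cons_succ] at hye
              exact Or.inl ⟨jj', Fin.succ_lt_succ_iff.1 hjj, hye⟩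
          · exact Or.inr h
        exact hsign' z b' hz' x y hx' hy'
end GRG

namespace GRG
open Finset

lemma Gfun_le (q : ℕ) (hq : 1 ≤ q) : ∀ (m l : ℕ), Gfun q l m ≤ (2*q*(l+m))^m := by
  intro m
  induction m with
  | zero => intro l; simp [Gfun]
  | succ m IH =>
    intro l
    have hB1 : 1 ≤ 2*q*(l+(m+1)) := by nlinarith
    have hpow1 : 1 ≤ (2*q*(l+(m+1)))^m := Nat.one_le_pow _ _ (by omega)
    calc Gfun q l (m+1) = q*(l+1)*Gfun q (l+1) m + 1 := rfl
    _ ≤ q*(l+1)*(2*q*((l+1)+m))^m + 1 := by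
        have := IH (l+1)
        exact Nat.add_le_add_right (Nat.mul_le_mul_left _ this) 1
    _ = q*(l+1)*(2*q*(l+(m+1)))^m + 1 := by
        have he : (l+1)+m = l+(m+1) := by omega
        rw [he]
    _ ≤ q*(l+(m+1))*(2*q*(l+(m+1)))^m + 1*(2*q*(l+(m+1)))^m := by
        have h1 : q*(l+1) ≤ q*(l+(m+1)) := Nat.mul_le_mul_left q (by omega)
        exact Nat.add_le_add (Nat.mul_le_mul_right _ h1) (by omega)
    _ = (q*(l+(m+1)) + 1)*(2*q*(l+(m+1)))^m := by ring
    _ ≤ (2*q*(l+(m+1)))*(2*q*(l+(m+1)))^m := by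
        apply Nat.mul_le_mul_right
        nlinarith
    _ = (2*q*(l+(m+1)))^(m+1) := by rw [← pow_succ']
end GRG

section main
open GRG Finset

theorem geom_ramsey_prop (n q : ℕ) (hn : 2 ≤ n) (hq : 1 ≤ q) :
    GeomRamseyProp n q ((q * n) ^ (8 * q * n ^ 2)) := by
  intro V hVcard hgen χ
  set M := q * ((n-1)*(n-1)+1) with hM
  -- numeric chain
  have hqn2 : 2 ≤ q * n := by nlinarith
  have hMle : M ≤ q * n * n := by
    have hnn : (n-1)*(n-1)+1 ≤ n*n := by
      obtain ⟨a, rfl⟩ : ∃ a, n = a + 1 := ⟨n-1, by omega⟩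
      simp only [Nat.add_sub_cancel]
      nlinarith
    calc M = q * ((n-1)*(n-1)+1) := hM
    _ ≤ q * (n*n) := Nat.mul_le_mul_left q hnn
    _ = q * n * n := by ring
  have hGle : Gfun q 0 M ≤ (q*n) ^ (8*q*n^2) := by
    calc Gfun q 0 M ≤ (2*q*(0+M))^M := Gfun_le q hq M 0
    _ = (2*q*M)^M := by rw [Nat.zero_add]
    _ ≤ ((q*n)^4)^M := by
        apply Nat.pow_le_pow_left
        have h4 : 4 ≤ (q*n)*(q*n) := Nat.mul_le_mul hqn2 hqn2
        calc 2*q*M ≤ 2*q*(q*n*n) := Nat.mul_le_mul_left _ hMle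
        _ = 2*((q*n)*(q*n)) := by ring
        _ ≤ 4*((q*n)*(q*n)) := Nat.mul_le_mul_right _ (by norm_num)
        _ ≤ ((q*n)*(q*n))*((q*n)*(q*n)) := Nat.mul_le_mul_right _ h4
        _ = (q*n)^4 := by ring
    _ = (q*n)^(4*M) := by rw [← pow_mul]
    _ ≤ (q*n)^(8*q*n^2) := by
        apply Nat.pow_le_pow_right (by omega)
        have h1 : M ≤ q * n^2 := by
          calc M ≤ q*n*n := hMle
          _ = q*n^2 := by ring
        calc 4*M ≤ 4*(q*n^2) := Nat.mul_le_mul_left 4 h1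
        _ ≤ 8*(q*n^2) := Nat.mul_le_mul_right _ (by norm_num)
        _ = 8*q*n^2 := by ring
  have hGV : Gfun q 0 M ≤ V.card := le_trans hGle hVcard
  -- run the greedy extraction
  obtain ⟨v, e, c, hvS, heS, hmono, hve, hχv, hχe, hsign⟩ :=
    greedy V hgen q hq χ M [] V (fun s hs => hs) (by simp) (by simp)
      (by simpa using hGV)
  have hvV : ∀ i, v i ∈ V := hvS
  -- pigeonhole on colours
  have hcolor : ∃ c₀ : Fin q, (n-1)*(n-1)+1 ≤ (Finset.univ.filter (fun i => c i = c₀)).card := by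
    have hmaps : ∀ a ∈ (Finset.univ : Finset (Fin M)), c a ∈ (Finset.univ : Finset (Fin q)) :=
      fun a _ => Finset.mem_univ _
    have hne : (Finset.univ : Finset (Fin q)).Nonempty := by
      rw [← Finset.card_pos]; simp; omega
    have hcards : (Finset.univ : Finset (Fin q)).card * ((n-1)*(n-1)+1)
        ≤ (Finset.univ : Finset (Fin M)).card := by
      simp [hM]
    obtain ⟨c₀, -, h⟩ := Finset.exists_le_card_fiber_of_mul_le_card_of_maps_to hmaps hne hcards
    exact ⟨c₀, h⟩
  obtain ⟨c₀, hc₀⟩ := hcolor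
  set I := Finset.univ.filter (fun i => c i = c₀) with hI
  -- the boolean relation
  classical
  set τ : Fin M → Fin M → Bool := fun a b => decide (0 < D (v a) (v b) e) with hτ
  -- distinctness of points
  have hdist : ∀ a b : Fin M, a < b → v a ≠ v b := fun a b h => llt_ne (hmono a b h)
  have hDe : ∀ a b : Fin M, a < b → D (v a) (v b) e ≠ 0 := by
    intro a b h
    exact genpos_D_ne hgen (hvV a) (hvV b) heS (hdist a b h)
      (llt_ne (hve a)) (llt_ne (hve b))
  have hDc : ∀ a b k : Fin M, a < b → b < k → D (v a) (v b) (v k) ≠ 0 := by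
    intro a b k h1 h2
    exact genpos_D_ne hgen (hvV a) (hvV b) (hvV k) (hdist a b h1)
      (hdist a k (lt_trans h1 h2)) (hdist b k h2)
  -- constancy transport: sign at (v k) ↔ sign at e
  have hcst : ∀ a b k : Fin M, a < b → b < k →
      (0 < D (v a) (v b) (v k) ↔ 0 < D (v a) (v b) e) := by
    intro a b k h1 h2
    exact hsign (v a) b (Or.inr ⟨a, h1, rfl⟩) (v k) e
      (Or.inl ⟨k, h2, rfl⟩) (Or.inr rfl)
  -- transitivity, positive
  have htP : ∀ a b k : Fin M, a ∈ I → b ∈ I → k ∈ I → a < b → b < k →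
      τ a b = true → τ b k = true → τ a k = true := by
    intro a b k _ _ _ h1 h2 hab hbk
    have e1 : 0 < D (v a) (v b) e := of_decide_eq_true hab
    have e2 : 0 < D (v b) (v k) e := of_decide_eq_true hbk
    have e3 : 0 < D (v a) (v b) (v k) := (hcst a b k h1 h2).2 e1
    exact decide_eq_true (D_trans_pos (hmono a b h1) (hmono b k h2) (hve k) e3 e2)
  have htN : ∀ a b k : Fin M, a ∈ I → b ∈ I → k ∈ I → a < b → b < k →
      τ a b = false → τ b k = false → τ a k = false := by
    intro a b k _ _ _ h1 h2 hab hbk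
    have e1 : D (v a) (v b) e < 0 := by
      have h := of_decide_eq_false hab
      rcases lt_trichotomy (D (v a) (v b) e) 0 with h' | h' | h'
      · exact h'
      · exact absurd h' (hDe a b h1)
      · exact absurd h' h
    have e2 : D (v b) (v k) e < 0 := by
      have h := of_decide_eq_false hbk
      rcases lt_trichotomy (D (v b) (v k) e) 0 with h' | h' | h'
      · exact h'
      · exact absurd h' (hDe b k h2)
      · exact absurd h' h
    have e3 : D (v a) (v b) (v k) < 0 := by
      have h := (hcst a b k h1 h2).not.2 (by linarith [e1] : ¬ 0 < D (v a) (v b) e)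
      rcases lt_trichotomy (D (v a) (v b) (v k)) 0 with h' | h' | h'
      · exact h'
      · exact absurd h' (hDc a b k h1 h2)
      · exact absurd h' h
    apply decide_eq_false
    have := D_trans_neg (hmono a b h1) (hmono b k h2) (hve k) e3 e2
    linarith
  -- extract the chain
  obtain ⟨J, hJI, hJcard, hJall⟩ := mirsky (by omega) I τ htP htN hc₀
  -- enumerate J in increasing order
  set u : Fin n → Fin M := fun i => ((J.orderIsoOfFin hJcard) i : Fin M) with hu
  have humono : ∀ i j : Fin n, i < j → u i < u j := by
    intro i j hij
    have := (J.orderIsoOfFin hJcard).lt_iff_lt.2 hij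
    exact this
  have huJ : ∀ i, u i ∈ J := fun i => ((J.orderIsoOfFin hJcard) i).2
  set w : Fin n → Pt := fun i => v (u i) with hw
  have hwmono : ∀ i j : Fin n, i < j → llt (w i) (w j) :=
    fun i j hij => hmono _ _ (humono i j hij)
  -- all triples have the same orientation
  have hσ : ∃ σ : ℝ, ∀ i j k : Fin n, i < j → j < k → 0 < σ * D (w i) (w j) (w k) := by
    rcases hJall with hall | hall
    · refine ⟨1, fun i j k hij hjk => ?_⟩
      rw [one_mul]
      have ht := hall (u i) (huJ i) (u j) (huJ j) (humono i j hij)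
      have e1 : 0 < D (v (u i)) (v (u j)) e := of_decide_eq_true ht
      exact (hcst (u i) (u j) (u k) (humono i j hij) (humono j k hjk)).2 e1
    · refine ⟨-1, fun i j k hij hjk => ?_⟩
      have ht := hall (u i) (huJ i) (u j) (huJ j) (humono i j hij)
      have e1 : D (v (u i)) (v (u j)) e < 0 := by
        have h := of_decide_eq_false ht
        rcases lt_trichotomy (D (v (u i)) (v (u j)) e) 0 with h' | h' | h'
        · exact h'
        · exact absurd h' (hDe _ _ (humono i j hij))
        · exact absurd h' h
      have e3 : D (v (u i)) (v (u j)) (v (u k)) < 0 := by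
        have h := (hcst (u i) (u j) (u k) (humono i j hij) (humono j k hjk)).not.2
          (by linarith : ¬ 0 < D (v (u i)) (v (u j)) e)
        rcases lt_trichotomy (D (v (u i)) (v (u j)) (v (u k))) 0 with h' | h' | h'
        · exact h'
        · exact absurd h' (hDc _ _ _ (humono i j hij) (humono j k hjk))
        · exact absurd h' h
      have : D (w i) (w j) (w k) < 0 := e3
      linarith
  obtain ⟨σ, htri⟩ := hσ
  -- final set
  set T := Finset.image w Finset.univ with hT
  have hwinj : Function.Injective w := by
    intro i j h
    rcases lt_trichotomy i j with hij | hij | hij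
    · exact absurd h (llt_ne (hwmono i j hij))
    · exact hij
    · exact absurd h.symm (llt_ne (hwmono j i hij))
  refine ⟨T, ?_, ?_, ?_, c₀, ?_⟩
  · intro x hx
    obtain ⟨i, -, rfl⟩ := Finset.mem_image.1 hx
    exact hvV (u i)
  · rw [hT, Finset.card_image_of_injective _ hwinj, Finset.card_univ, Fintype.card_fin]
  · exact convexPos_of_signs hn w hwmono σ htri
  · -- colours
    intro e' he' hecard
    obtain ⟨x, y, hxy, rfl⟩ := Finset.card_eq_two.1 hecard
    have hx : x ∈ T := he' (Finset.mem_insert_self _ _)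
    have hy : y ∈ T := he' (Finset.mem_insert_of_mem (Finset.mem_singleton_self _))
    obtain ⟨i, -, rfl⟩ := Finset.mem_image.1 hx
    obtain ⟨j, -, rfl⟩ := Finset.mem_image.1 hy
    have hij : i ≠ j := fun h => hxy (by rw [h])
    have hcI : ∀ i : Fin n, c (u i) = c₀ := by
      intro i
      have := hJI (huJ i)
      rw [hI] at this
      exact (Finset.mem_filter.1 this).2
    rcases lt_trichotomy i j with h | h | h
    · have := hχv (u i) (u j) (humono i j h)
      rw [hw]
      rw [this, hcI i]
    · exact absurd h hij
    · have := hχv (u j) (u i) (humono j i h)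
      rw [hw, Finset.pair_comm]
      rw [this, hcI j]

end main

/-- Upper bound: `g(Kₙ; q) ≤ 2^(8 q n² log₂(q n)) = (q n)^(8 q n²)`. -/
theorem geom_ramsey_graph_upper (n q : ℕ) (hn : 2 ≤ n) (hq : 1 ≤ q) :
    sInf {N | GeomRamseyProp n q N} ≤ (q * n) ^ (8 * q * n ^ 2) := by
  exact Nat.sInf_le (geom_ramsey_prop n q hn hq)
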